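/- For any rooted tree with n ≥ 1 non-root nodes, IDI(T) ≤ ⌊(n+1)²/4⌋, i.e., the sum of root-to-leaf distances is at most (1 + ⌊(n−1)/2⌋)(n − ⌊(n−1)/2⌋). -/

import Mathlib

/-- A rooted tree with root `0` and non-root nodes `1, …, n`,
given by a parent function that strictly decreases. -/
structure RTree (n : ℕ) where
  parent : ℕ → ℕ
  parent_lt : ∀ v, 0 < v → parent v < v

namespace RTree

variable {n : ℕ}

/-- Distance from the root to a node. -/
def level (T : RTree n) : ℕ → ℕ
  | 0 => 0
  | v + 1 => T.level (T.parent (v + 1)) + 1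
  termination_by v => v
  decreasing_by exact T.parent_lt _ (Nat.succ_pos _)

/-- Depth: maximum distance from the root to any node. -/
def depth (T : RTree n) : ℕ := (Finset.Icc 1 n).sup T.level

/-- The set of nodes at distance exactly `k` from the root. -/
def levelSet (T : RTree n) (k : ℕ) : Finset ℕ :=
  (Finset.Icc 1 n).filter (fun v => T.level v = k)

/-- Breadth: maximum size of a level set over positive levels. -/
def breadth (T : RTree n) : ℕ :=
  (Finset.Icc 1 n).sup (fun k => (T.levelSet k).card)

/-- Leaves: non-root nodes with no children. -/
def leaves (T : RTree n) : Finset ℕ :=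
  (Finset.Icc 1 n).filter (fun v => (Finset.Icc 1 n).filter (fun w => T.parent w = v) = ∅)

/-- Influence Dispersion Index: sum of root-to-leaf distances. -/
def IDI (T : RTree n) : ℕ := ∑ l ∈ T.leaves, T.level l

/-- The children of a node. -/
def children (T : RTree n) (u : ℕ) : Finset ℕ :=
  (Finset.Icc 1 n).filter (fun v => T.parent v = u)

end RTree

namespace RTree

variable {n : ℕ}

lemma level_parent (T : RTree n) {v : ℕ} (h : 0 < v) :
    T.level (T.parent v) + 1 = T.level v := by
  obtain ⟨w, rfl⟩ := Nat.exists_eq_succ_of_ne_zero h.ne'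
  rw [level]

lemma level_pos (T : RTree n) {v : ℕ} (h : 0 < v) : 0 < T.level v := by
  rw [← T.level_parent h]; omega

lemma pos_of_level_pos (T : RTree n) {v : ℕ} (h : 0 < T.level v) : 0 < v := by
  by_contra hc
  push_neg at hc
  interval_cases v
  simp [level] at h

lemma iter_facts (T : RTree n) (v : ℕ) :
    ∀ i, i ≤ T.level v →
      T.level (T.parent^[i] v) = T.level v - i ∧ T.parent^[i] v ≤ v := by
  intro i
  induction i with
  | zero => simp
  | succ i ih =>
    intro h
    obtain ⟨h1, h2⟩ := ih (by omega)
    have hpos : 0 < T.level (T.parent^[i] v) := by omega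
    have hvpos : 0 < T.parent^[i] v := T.pos_of_level_pos hpos
    rw [Function.iterate_succ_apply']
    have h3 := T.level_parent hvpos
    have h4 := T.parent_lt _ hvpos
    constructor
    · omega
    · omega

theorem IDI_upper_bound' (hn : 1 ≤ n) (T : RTree n) :
    T.IDI ≤ (n + 1) ^ 2 / 4 := by
  set d := T.depth with hd
  set L := T.leaves.card with hL
  have hleaves_sub : T.leaves ⊆ Finset.Icc 1 n := Finset.filter_subset _ _
  have hLn : L ≤ n := by
    have := Finset.card_le_card hleaves_sub
    simpa using this
  -- IDI ≤ L * d
  have hIDI : T.IDI ≤ L * d := by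
    have : ∀ l ∈ T.leaves, T.level l ≤ d :=
      fun l hl => Finset.le_sup (hleaves_sub hl)
    calc T.IDI ≤ T.leaves.card • d := Finset.sum_le_card_nsmul _ _ _ this
    _ = L * d := by simp [hL]
  -- a deepest node
  have hne : (Finset.Icc 1 n).Nonempty := ⟨1, by simp [hn]⟩
  obtain ⟨v, hv, hvd⟩ := Finset.exists_mem_eq_sup (Finset.Icc 1 n) hne T.level
  replace hvd : T.level v = d := hvd.symm
  simp only [Finset.mem_Icc] at hv
  -- inject i ↦ parent^[i] v, 1 ≤ i ≤ d-1, into non-leaves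
  have hinj : (Finset.Icc 1 (d-1)).card ≤ ((Finset.Icc 1 n) \ T.leaves).card := by
    apply Finset.card_le_card_of_injOn (fun i => T.parent^[i] v)
    · intro i hi
      simp only [Finset.mem_coe, Finset.mem_Icc] at hi ⊢
      have hd2 : 2 ≤ d := by omega
      obtain ⟨hl1, hl2⟩ := T.iter_facts v i (by omega)
      have hlpos : 0 < T.level (T.parent^[i] v) := by omega
      have hpos : 0 < T.parent^[i] v := T.pos_of_level_pos hlpos
      rw [Finset.mem_sdiff]
      constructor
      · simp only [Finset.mem_Icc]; omega
      · -- it has the child parent^[i-1] v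
        intro hleaf
        simp only [leaves, Finset.mem_filter] at hleaf
        have hchild : T.parent^[i-1] v ∈
            (Finset.Icc 1 n).filter (fun w => T.parent w = T.parent^[i] v) := by
          obtain ⟨hc1, hc2⟩ := T.iter_facts v (i-1) (by omega)
          have hcpos : 0 < T.parent^[i-1] v := T.pos_of_level_pos (by omega)
          rw [Finset.mem_filter, Finset.mem_Icc]
          refine ⟨⟨hcpos, by omega⟩, ?_⟩
          rw [← Function.iterate_succ_apply' T.parent (i-1) v]
          congr 1
          omega
        rw [hleaf.2] at hchild
        simp at hchild
    · intro i hi j hj hij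
      have hi' : 1 ≤ i ∧ i ≤ d - 1 := by simpa using hi
      have hj' : 1 ≤ j ∧ j ≤ d - 1 := by simpa using hj
      have h1 := (T.iter_facts v i (by omega)).1
      have h2 := (T.iter_facts v j (by omega)).1
      simp only at hij
      rw [hij] at h1
      omega
  have hcard : ((Finset.Icc 1 n) \ T.leaves).card = n - L := by
    rw [Finset.card_sdiff_of_subset hleaves_sub, Nat.card_Icc]
    omega
  rw [hcard] at hinj
  simp only [Nat.card_Icc] at hinj
  -- so d + L ≤ n + 1
  have hsum : d + L ≤ n + 1 := by omega
  -- finish with AM-GM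
  rw [Nat.le_div_iff_mul_le (by norm_num : 0 < 4)]
  have h4 : L * d * 4 ≤ (n+1)^2 := by
    have hz : (d:ℤ) + L ≤ (n:ℤ) + 1 := by exact_mod_cast hsum
    zify
    nlinarith [sq_nonneg ((L:ℤ) - d), hz, sq_nonneg ((L:ℤ) + d)]
  calc T.IDI * 4 ≤ L * d * 4 := by omega
  _ ≤ (n+1)^2 := h4

end RTree

/-- Upper bound: IDI ≤ ⌊(n+1)²/4⌋ = (1 + ⌊(n−1)/2⌋)(n − ⌊(n−1)/2⌋). -/
theorem IDI_upper_bound (n : ℕ) (hn : 1 ≤ n) (T : RTree n) :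
    T.IDI ≤ (n + 1) ^ 2 / 4 ∧
    (n + 1) ^ 2 / 4 = (1 + (n - 1) / 2) * (n - (n - 1) / 2) := by
  refine ⟨T.IDI_upper_bound' hn, ?_⟩
  obtain ⟨q, hq | hq⟩ : ∃ q, n = 2*q+1 ∨ n = 2*q+2 := ⟨(n-1)/2, by omega⟩
  · subst hq
    rw [show (2*q+1-1)/2 = q from by omega, show 2*q+1-q = q+1 from by omega]
    have h : (2*q+1+1)^2 = (1+q)*(q+1)*4 := by ring
    omega
  · subst hq
    rw [show (2*q+2-1)/2 = q from by omega, show 2*q+2-q = q+2 from by omega]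
    have h : (2*q+2+1)^2 = (1+q)*(q+2)*4+1 := by ring
    omega
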